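/- Let G₁, G₂ be finite simple graphs on disjoint vertex sets, let u ∈ V(G₁), v ∈ V(G₂), and let G be the graph obtained from the disjoint union G₁ ⊎ G₂ by adding the edge uv. Then B(G;x,y) = A₁B₂ + A₂B₁ + x(A₁C₂ + A₂C₁) + A₁A₂ + B₁B₂ + B₁C₂ + C₁B₂ + C₁C₂, where for i = 1,2: Aᵢ = Σ x^{|B(S)|}y^{|S|} over S ⊆ V(Gᵢ) containing the marked vertex; Bᵢ = Σ x^{|B(S)|}y^{|S|} over S ⊆ V(Gᵢ) not containing the marked vertex and disjoint from its neighborhood; Cᵢ = Σ x^{|B(S)|}y^{|S|} over S ⊆ V(Gᵢ) not containing the marked vertex but meeting its neighborhood. -/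

import Mathlib

open Finset MvPolynomial

attribute [local instance] Classical.propDecidable

/-- The outer boundary of a vertex set `S`. -/
noncomputable def outerBoundary {V : Type*} [Fintype V] (G : SimpleGraph V) (S : Finset V) :
    Finset V :=
  Finset.univ.filter (fun v => v ∉ S ∧ ∃ u ∈ S, G.Adj u v)

/-- The boundary polynomial `B(G;x,y)` with `x = X 0`, `y = X 1`. -/
noncomputable def boundaryPoly {V : Type*} [Fintype V] (G : SimpleGraph V) :
    MvPolynomial (Fin 2) ℤ :=
  ∑ S : Finset V, X 0 ^ (outerBoundary G S).card * X 1 ^ S.card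

/-- Disjoint union of `G₁` and `G₂` together with one additional bridge edge `uv`. -/
def bridgeGraph {V W : Type*} (G : SimpleGraph V) (H : SimpleGraph W) (u : V) (v : W) :
    SimpleGraph (V ⊕ W) where
  Adj x y := Sum.LiftRel G.Adj H.Adj x y ∨
    (x = Sum.inl u ∧ y = Sum.inr v) ∨ (x = Sum.inr v ∧ y = Sum.inl u)
  symm := ⟨fun x y h => by
    rcases h with h | ⟨a, b⟩ | ⟨a, b⟩
    · cases h with
      | inl h => exact Or.inl (Sum.LiftRel.inl h.symm)
      | inr h => exact Or.inl (Sum.LiftRel.inr h.symm)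
    · exact Or.inr (Or.inr ⟨b, a⟩)
    · exact Or.inr (Or.inl ⟨b, a⟩)⟩
  loopless := ⟨fun x h => by
    rcases h with h | ⟨a, b⟩ | ⟨a, b⟩
    · cases h with
      | inl h => exact h.ne rfl
      | inr h => exact h.ne rfl
    · rw [a] at b; exact Sum.inl_ne_inr b
    · rw [a] at b; exact Sum.inr_ne_inl b⟩

lemma outerBoundary_bridge {V W : Type*} [Fintype V] [Fintype W]
    (G : SimpleGraph V) (H : SimpleGraph W) (u : V) (v : W) (S₁ : Finset V) (S₂ : Finset W) :
    outerBoundary (bridgeGraph G H u v) (S₁.disjSum S₂) =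
      (outerBoundary G S₁ ∪ (if u ∉ S₁ ∧ (∀ w ∈ S₁, ¬ G.Adj u w) ∧ v ∈ S₂ then {u} else ∅)).disjSum
      (outerBoundary H S₂ ∪ (if v ∉ S₂ ∧ (∀ w ∈ S₂, ¬ H.Adj v w) ∧ u ∈ S₁ then {v} else ∅)) := by
  ext x
  cases x with
  | inl a =>
    simp only [outerBoundary, Finset.mem_filter]
    simp only [outerBoundary, bridgeGraph, Finset.inl_mem_disjSum, Finset.mem_union,
      Finset.mem_filter, Finset.mem_univ, true_and, Finset.inl_mem_disjSum]
    constructor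
    · rintro ⟨ha, y, hy, hadj⟩
      cases y with
      | inl w =>
        rw [Finset.inl_mem_disjSum] at hy
        rcases hadj with h | ⟨h1, h2⟩ | ⟨h1, h2⟩
        · cases h with | inl h => exact Or.inl ⟨ha, w, hy, h⟩
        · exact absurd h2 (by simp)
        · exact absurd h1 (by simp)
      | inr b =>
        rw [Finset.inr_mem_disjSum] at hy
        rcases hadj with h | ⟨h1, h2⟩ | ⟨h1, h2⟩
        · cases h
        · exact absurd h1 (by simp)
        · obtain rfl : a = u := by simpa using h2
          obtain rfl : b = v := by simpa using h1
          by_cases hall : ∀ w ∈ S₁, ¬ G.Adj a w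
          · right; rw [if_pos ⟨ha, hall, hy⟩]; simp
          · push_neg at hall
            obtain ⟨w, hw, hadj⟩ := hall
            exact Or.inl ⟨ha, w, hw, hadj.symm⟩
    · rintro (⟨ha, w, hw, hadj⟩ | h)
      · exact ⟨ha, Sum.inl w, by rwa [Finset.inl_mem_disjSum],
          Or.inl (Sum.LiftRel.inl hadj)⟩
      · split_ifs at h with hc
        · simp only [Finset.mem_singleton] at h
          subst h
          exact ⟨hc.1, Sum.inr v, by rw [Finset.inr_mem_disjSum]; exact hc.2.2,
            Or.inr (Or.inr ⟨rfl, rfl⟩)⟩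
        · simp at h
  | inr b =>
    simp only [outerBoundary, Finset.mem_filter]
    simp only [outerBoundary, bridgeGraph, Finset.inr_mem_disjSum, Finset.mem_union,
      Finset.mem_filter, Finset.mem_univ, true_and]
    constructor
    · rintro ⟨hb, y, hy, hadj⟩
      cases y with
      | inr w =>
        rw [Finset.inr_mem_disjSum] at hy
        rcases hadj with h | ⟨h1, h2⟩ | ⟨h1, h2⟩
        · cases h with | inr h => exact Or.inl ⟨hb, w, hy, h⟩
        · exact absurd h1 (by simp)
        · exact absurd h2 (by simp)
      | inl a =>
        rw [Finset.inl_mem_disjSum] at hy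
        rcases hadj with h | ⟨h1, h2⟩ | ⟨h1, h2⟩
        · cases h
        · obtain rfl : a = u := by simpa using h1
          obtain rfl : b = v := by simpa using h2
          by_cases hall : ∀ w ∈ S₂, ¬ H.Adj b w
          · right; rw [if_pos ⟨hb, hall, hy⟩]; simp
          · push_neg at hall
            obtain ⟨w, hw, hadj⟩ := hall
            exact Or.inl ⟨hb, w, hw, hadj.symm⟩
        · exact absurd h1 (by simp)
    · rintro (⟨hb, w, hw, hadj⟩ | h)
      · exact ⟨hb, Sum.inr w, by rwa [Finset.inr_mem_disjSum],
          Or.inl (Sum.LiftRel.inr hadj)⟩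
      · split_ifs at h with hc
        · simp only [Finset.mem_singleton] at h
          subst h
          exact ⟨hc.1, Sum.inl u, by rw [Finset.inl_mem_disjSum]; exact hc.2.2,
            Or.inr (Or.inl ⟨rfl, rfl⟩)⟩
        · simp at h

lemma card_outerBoundary_bridge {V W : Type*} [Fintype V] [Fintype W]
    (G : SimpleGraph V) (H : SimpleGraph W) (u : V) (v : W) (S₁ : Finset V) (S₂ : Finset W) :
    (outerBoundary (bridgeGraph G H u v) (S₁.disjSum S₂)).card =
      ((outerBoundary G S₁).card + (if u ∉ S₁ ∧ (∀ w ∈ S₁, ¬ G.Adj u w) ∧ v ∈ S₂ then 1 else 0))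
      + ((outerBoundary H S₂).card
        + (if v ∉ S₂ ∧ (∀ w ∈ S₂, ¬ H.Adj v w) ∧ u ∈ S₁ then 1 else 0)) := by
  rw [outerBoundary_bridge, Finset.card_disjSum]
  congr 1
  · rw [Finset.card_union_of_disjoint]
    · congr 1; split_ifs <;> simp
    · split_ifs with h
      · simp only [Finset.disjoint_singleton_right, outerBoundary, Finset.mem_filter]
        intro hmem
        obtain ⟨-, -, w, hw, hadj⟩ := hmem
        exact h.2.1 w hw hadj.symm
      · simp
  · rw [Finset.card_union_of_disjoint]
    · congr 1; split_ifs <;> simp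
    · split_ifs with h
      · simp only [Finset.disjoint_singleton_right, outerBoundary, Finset.mem_filter]
        intro hmem
        obtain ⟨-, -, w, hw, hadj⟩ := hmem
        exact h.2.1 w hw hadj.symm
      · simp

lemma term_eq {V W : Type*} [Fintype V] [Fintype W]
    (G : SimpleGraph V) (H : SimpleGraph W) (u : V) (v : W) (S₁ : Finset V) (S₂ : Finset W) :
    (X 0 : MvPolynomial (Fin 2) ℤ) ^ (outerBoundary (bridgeGraph G H u v) (S₁.disjSum S₂)).card
      * X 1 ^ (S₁.disjSum S₂).card =
    (fun (a₁ b₁ c₁ a₂ b₂ c₂ : MvPolynomial (Fin 2) ℤ) =>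
        a₁ * a₂ + X 0 * (a₁ * b₂) + a₁ * c₂
        + X 0 * (b₁ * a₂) + b₁ * b₂ + b₁ * c₂
        + c₁ * a₂ + c₁ * b₂ + c₁ * c₂)
      (if u ∈ S₁ then X 0 ^ (outerBoundary G S₁).card * X 1 ^ S₁.card else 0)
      (if u ∉ S₁ ∧ ∀ w ∈ S₁, ¬ G.Adj u w then
        X 0 ^ (outerBoundary G S₁).card * X 1 ^ S₁.card else 0)
      (if u ∉ S₁ ∧ ∃ w ∈ S₁, G.Adj u w then
        X 0 ^ (outerBoundary G S₁).card * X 1 ^ S₁.card else 0)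
      (if v ∈ S₂ then X 0 ^ (outerBoundary H S₂).card * X 1 ^ S₂.card else 0)
      (if v ∉ S₂ ∧ ∀ w ∈ S₂, ¬ H.Adj v w then
        X 0 ^ (outerBoundary H S₂).card * X 1 ^ S₂.card else 0)
      (if v ∉ S₂ ∧ ∃ w ∈ S₂, H.Adj v w then
        X 0 ^ (outerBoundary H S₂).card * X 1 ^ S₂.card else 0) := by
  rw [card_outerBoundary_bridge, Finset.card_disjSum]
  by_cases h1 : u ∈ S₁ <;> by_cases h2 : ∀ w ∈ S₁, ¬ G.Adj u w <;>
    by_cases h3 : v ∈ S₂ <;> by_cases h4 : ∀ w ∈ S₂, ¬ H.Adj v w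
  all_goals try (have hE1 : (∃ w ∈ S₁, G.Adj u w) ↔ False :=
    iff_false_intro (by push_neg; exact h2))
  all_goals try (have hE1 : (∃ w ∈ S₁, G.Adj u w) ↔ True :=
    iff_true_intro (by push_neg at h2; exact h2))
  all_goals try (have hE2 : (∃ w ∈ S₂, H.Adj v w) ↔ False :=
    iff_false_intro (by push_neg; exact h4))
  all_goals try (have hE2 : (∃ w ∈ S₂, H.Adj v w) ↔ True :=
    iff_true_intro (by push_neg at h4; exact h4))
  all_goals try (have hI1 : (∀ w ∈ S₁, ¬ G.Adj u w) ↔ True := iff_true_intro h2)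
  all_goals try (have hI1 : (∀ w ∈ S₁, ¬ G.Adj u w) ↔ False := iff_false_intro h2)
  all_goals try (have hI2 : (∀ w ∈ S₂, ¬ H.Adj v w) ↔ True := iff_true_intro h4)
  all_goals try (have hI2 : (∀ w ∈ S₂, ¬ H.Adj v w) ↔ False := iff_false_intro h4)
  all_goals (simp only [h1, h3, hE1, hE2, hI1, hI2, eq_self_iff_true, not_true, not_false_iff,
    true_and, and_true, false_and, and_false, if_true, if_false, iff_true, iff_false,
    eq_true h1, pow_add] <;> ring)


/-- Boundary polynomial of two graphs joined by a single bridge edge, in the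
matrix form `(A₁, B₁, C₁) · [[1,x,1],[x,1,1],[1,1,1]] · (A₂, B₂, C₂)ᵀ`. -/
theorem boundaryPoly_bridge {V W : Type*} [Fintype V] [Fintype W]
    (G : SimpleGraph V) (H : SimpleGraph W) (u : V) (v : W) :
    boundaryPoly (bridgeGraph G H u v) =
      (fun (A₁ B₁ C₁ A₂ B₂ C₂ : MvPolynomial (Fin 2) ℤ) =>
        A₁ * A₂ + X 0 * (A₁ * B₂) + A₁ * C₂
        + X 0 * (B₁ * A₂) + B₁ * B₂ + B₁ * C₂
        + C₁ * A₂ + C₁ * B₂ + C₁ * C₂)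
      (∑ S ∈ Finset.univ.filter (fun S : Finset V => u ∈ S),
        X 0 ^ (outerBoundary G S).card * X 1 ^ S.card)
      (∑ S ∈ Finset.univ.filter (fun S : Finset V =>
          u ∉ S ∧ ∀ w ∈ S, ¬ G.Adj u w),
        X 0 ^ (outerBoundary G S).card * X 1 ^ S.card)
      (∑ S ∈ Finset.univ.filter (fun S : Finset V =>
          u ∉ S ∧ ∃ w ∈ S, G.Adj u w),
        X 0 ^ (outerBoundary G S).card * X 1 ^ S.card)
      (∑ S ∈ Finset.univ.filter (fun S : Finset W => v ∈ S),
        X 0 ^ (outerBoundary H S).card * X 1 ^ S.card)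
      (∑ S ∈ Finset.univ.filter (fun S : Finset W =>
          v ∉ S ∧ ∀ w ∈ S, ¬ H.Adj v w),
        X 0 ^ (outerBoundary H S).card * X 1 ^ S.card)
      (∑ S ∈ Finset.univ.filter (fun S : Finset W =>
          v ∉ S ∧ ∃ w ∈ S, H.Adj v w),
        X 0 ^ (outerBoundary H S).card * X 1 ^ S.card) := by
  have hbij : Function.Bijective (fun p : Finset V × Finset W => p.1.disjSum p.2) := by
    constructor
    · rintro ⟨a, b⟩ ⟨c, d⟩ h
      simpa [Prod.ext_iff] using Finset.disjSum_inj.mp h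
    · intro S
      exact ⟨(S.toLeft, S.toRight), S.toLeft_disjSum_toRight⟩
  have hre := Fintype.sum_bijective (fun p : Finset V × Finset W => p.1.disjSum p.2) hbij
    (fun p => (X 0 : MvPolynomial (Fin 2) ℤ)
      ^ (outerBoundary (bridgeGraph G H u v) (p.1.disjSum p.2)).card * X 1 ^ (p.1.disjSum p.2).card)
    (fun S => (X 0 : MvPolynomial (Fin 2) ℤ)
      ^ (outerBoundary (bridgeGraph G H u v) S).card * X 1 ^ S.card)
    (fun p => rfl)
  rw [boundaryPoly, ← hre, Fintype.sum_prod_type]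
  rw [Finset.sum_comm]
  simp only [Finset.sum_filter, Finset.sum_mul_sum, Finset.sum_mul, Finset.mul_sum,
    ← Finset.sum_add_distrib]
  refine Finset.sum_congr rfl fun S₂ _ => ?_
  refine Finset.sum_congr rfl fun S₁ _ => ?_
  refine (term_eq G H u v S₁ S₂).trans ?_
  ring
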